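/- (Lemma 1, gradient form.) Let X be a measurable space, β a probability measure on X (the data distribution p_data), d ∈ ℕ, θ₀ ∈ ℝ^d, and P : ℝ^d → Measure X a family of probability measures (the generator family p_{g_θ}). Let r : X → (0,1) be measurable (the reversed discriminator x ↦ q^r_{φ₀}(y=0|x)), set ρ := (1/2)•P θ₀ + (1/2)•β, Z₀ := ∫ r dρ, assume 0 < Z₀ < 1, and define π₀ := Z₀⁻¹ • (r·ρ) and π₁ := (1−Z₀)⁻¹ • ((1−r)·ρ). Assume: (i) log∘(1−r) is integrable with respect to β and klDiv(β‖π₁) < ⊤; (ii) there is a neighborhood U of θ₀ such that for all θ ∈ U, P θ ≪ ρ, klDiv(P θ‖ρ) < ⊤, and log∘r is integrable with respect to P θ; (iii) the function G(θ) := (1/2)·(klDiv(P θ‖π₀)).toReal + (1/2)·(klDiv(β‖π₁)).toReal − (JSD(P θ, β)).toReal is differentiable at θ₀; (iv) the function H(θ) := (klDiv((1/2)•P θ + (1/2)•β ‖ ρ)).toReal is differentiable at θ₀. Then the generator objective F(θ) := −(1/2)∫ log(r x) d(P θ) − (1/2)∫ log(1−r x) dβ is differentiable at θ₀ and ∇F(θ₀)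 = ∇G(θ₀); i.e., the gradient of the negative GAN generator objective at θ₀ equals the gradient of E_{p(y)}[KL(p_θ(x|y)‖q^r(x|y))] − JSD(p_{g_θ}, p_data) at θ₀. -/

import Mathlib

open MeasureTheory Real
open scoped ENNReal NNReal

open scoped Classical in
/-- Kullback-Leibler divergence of measures (Mathlib's definition). -/
noncomputable def klDiv {X : Type*} [MeasurableSpace X] (μ ν : Measure X) : ℝ≥0∞ :=
  if μ ≪ ν ∧ Integrable (llr μ ν) μ then ENNReal.ofReal (∫ x, llr μ ν x ∂μ) else ⊤

/-- Jensen-Shannon divergence of measures. -/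
noncomputable def JSD {X : Type*} [MeasurableSpace X] (μ ν : Measure X) : ℝ≥0∞ :=
  (1 / 2) * klDiv μ ((1 / 2 : ℝ≥0∞) • μ + (1 / 2 : ℝ≥0∞) • ν) +
    (1 / 2) * klDiv ν ((1 / 2 : ℝ≥0∞) • μ + (1 / 2 : ℝ≥0∞) • ν)

section Aux

variable {X : Type*} [MeasurableSpace X]

lemma aux_integral_llr_nonneg {μ ν : Measure X} [IsProbabilityMeasure μ] [IsProbabilityMeasure ν]
    (hμν : μ ≪ ν) (h_int : Integrable (llr μ ν) μ) :
    0 ≤ ∫ x, llr μ ν x ∂μ := by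
  set f : X → ℝ := fun x => (μ.rnDeriv ν x).toReal with hf
  have hf_int : Integrable f ν := Measure.integrable_toReal_rnDeriv
  have hf_eq : ∫ x, f x ∂ν = 1 := by
    rw [hf, Measure.integral_toReal_rnDeriv hμν]; simp
  have h_tr : ∫ x, llr μ ν x ∂μ = ∫ x, f x * Real.log (f x) ∂ν := by
    rw [← integral_rnDeriv_smul hμν (f := llr μ ν)]
    simp only [llr_def, smul_eq_mul, hf]
  have h_int' : Integrable (fun x => f x * Real.log (f x)) ν := by
    have := (integrable_rnDeriv_smul_iff hμν (f := llr μ ν)).mpr h_int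
    simpa only [llr_def, smul_eq_mul, hf] using this
  have hmem : ∀ᵐ x ∂ν, f x ∈ Set.Ici (0:ℝ) := .of_forall fun x => ENNReal.toReal_nonneg
  have hjen := Real.convexOn_mul_log.map_integral_le Real.continuous_mul_log.continuousOn
    isClosed_Ici hmem hf_int h_int'
  rw [hf_eq] at hjen
  simpa [h_tr] using hjen

lemma aux_klDiv_eq_ofReal {μ ν : Measure X}
    (hμν : μ ≪ ν) (h_int : Integrable (llr μ ν) μ) :
    klDiv μ ν = ENNReal.ofReal (∫ x, llr μ ν x ∂μ) := by
  unfold klDiv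
  rw [if_pos ⟨hμν, h_int⟩]

lemma aux_klDiv_toReal {μ ν : Measure X} [IsProbabilityMeasure μ] [IsProbabilityMeasure ν]
    (hμν : μ ≪ ν) (h_int : Integrable (llr μ ν) μ) :
    (klDiv μ ν).toReal = ∫ x, llr μ ν x ∂μ := by
  rw [aux_klDiv_eq_ofReal hμν h_int,
    ENNReal.toReal_ofReal (aux_integral_llr_nonneg hμν h_int)]

lemma aux_klDiv_cond_of_lt_top {μ ν : Measure X} (h : klDiv μ ν < ⊤) :
    μ ≪ ν ∧ Integrable (llr μ ν) μ := by
  by_contra hc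
  unfold klDiv at h
  rw [if_neg hc] at h
  exact absurd h (lt_irrefl ⊤)

lemma aux_klDiv_self (μ : Measure X) [SigmaFinite μ] : klDiv μ μ = 0 := by
  have h : llr μ μ =ᵐ[μ] fun _ => (0:ℝ) := by
    filter_upwards [Measure.rnDeriv_self μ] with x hx
    simp [llr_def, hx]
  unfold klDiv
  rw [if_pos ⟨Measure.AbsolutelyContinuous.rfl, (integrable_zero _ _ _).congr h.symm⟩,
    integral_congr_ae h]
  simp

lemma aux_isProb_mix (μ ν : Measure X) [IsProbabilityMeasure μ] [IsProbabilityMeasure ν] :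
    IsProbabilityMeasure ((1 / 2 : ℝ≥0∞) • μ + (1 / 2 : ℝ≥0∞) • ν) := by
  constructor
  simp only [Measure.add_apply, Measure.smul_apply, smul_eq_mul, measure_univ, mul_one]
  exact ENNReal.add_halves 1

lemma aux_llr_smul_withDensity {μ ρ : Measure X}
    [IsFiniteMeasure μ] [IsProbabilityMeasure ρ] (hμρ : μ ≪ ρ)
    {g : X → ℝ} (hg : Measurable g) (hg_pos : ∀ x, 0 < g x) (hg_le : ∀ x, g x ≤ 1)
    {c : ℝ} (hc : 0 < c) :
    llr μ ((ENNReal.ofReal c)⁻¹ • ρ.withDensity (fun x => ENNReal.ofReal (g x)))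
      =ᵐ[μ] fun x => Real.log c - Real.log (g x) + llr μ ρ x := by
  set f : X → ℝ≥0∞ := fun x => ENNReal.ofReal (g x) with hfdef
  have hf_meas : Measurable f := hg.ennreal_ofReal
  have hf_ne_zero : ∀ x, f x ≠ 0 := fun x => by
    simp [hfdef, ENNReal.ofReal_eq_zero, not_le, hg_pos x]
  have hf_ne_top : ∀ x, f x ≠ ∞ := fun x => ENNReal.ofReal_ne_top
  haveI hfin : IsFiniteMeasure (ρ.withDensity f) := by
    constructor
    rw [withDensity_apply _ MeasurableSet.univ, setLIntegral_univ]
    calc ∫⁻ x, f x ∂ρ ≤ ∫⁻ _, 1 ∂ρ :=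
          lintegral_mono fun x => ENNReal.ofReal_le_one.mpr (hg_le x)
      _ < ⊤ := by simp
  have hρ_wd : ρ ≪ ρ.withDensity f :=
    withDensity_absolutelyContinuous' hf_meas.aemeasurable (.of_forall hf_ne_zero)
  have h1 : μ.rnDeriv (ρ.withDensity f) =ᵐ[ρ] fun x => (f x)⁻¹ * μ.rnDeriv ρ x :=
    Measure.rnDeriv_withDensity_right μ ρ hf_meas.aemeasurable
      (.of_forall hf_ne_zero) (.of_forall hf_ne_top)
  have hc0 : (ENNReal.ofReal c)⁻¹ ≠ 0 := by
    simp [ENNReal.ofReal_ne_top]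
  have hctop : (ENNReal.ofReal c)⁻¹ ≠ ∞ := by
    simp [ENNReal.ofReal_eq_zero, not_le, hc]
  have h2 : μ.rnDeriv ((ENNReal.ofReal c)⁻¹ • ρ.withDensity f)
      =ᵐ[ρ.withDensity f] ((ENNReal.ofReal c)⁻¹)⁻¹ • μ.rnDeriv (ρ.withDensity f) :=
    Measure.rnDeriv_smul_right_of_ne_top μ (ρ.withDensity f) hc0 hctop
  filter_upwards [hμρ.ae_eq h1, (hμρ.trans hρ_wd).ae_eq h2, Measure.rnDeriv_pos hμρ,
    hμρ.ae_le (Measure.rnDeriv_lt_top μ ρ)] with x h1x h2x hpos hlt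
  have hDpos : 0 < (μ.rnDeriv ρ x).toReal := ENNReal.toReal_pos hpos.ne' hlt.ne
  simp only [llr_def]
  simp only [Pi.smul_apply, smul_eq_mul] at h2x
  rw [h2x, inv_inv, h1x, ← mul_assoc, ENNReal.toReal_mul, ENNReal.toReal_mul,
    ENNReal.toReal_ofReal hc.le, ENNReal.toReal_inv, ENNReal.toReal_ofReal (hg_pos x).le]
  rw [Real.log_mul (mul_pos hc (inv_pos.mpr (hg_pos x))).ne' hDpos.ne',
    Real.log_mul hc.ne' (inv_pos.mpr (hg_pos x)).ne', Real.log_inv]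
  ring

lemma aux_llr_chain {μ m ρ : Measure X}
    [IsFiniteMeasure μ] [IsFiniteMeasure m] [IsFiniteMeasure ρ]
    (hμm : μ ≪ m) (hmρ : m ≪ ρ) :
    llr μ ρ =ᵐ[μ] fun x => llr μ m x + llr m ρ x := by
  have h := Measure.rnDeriv_mul_rnDeriv (κ := ρ) hμm
  filter_upwards [(hμm.trans hmρ).ae_eq h, Measure.rnDeriv_pos hμm,
    hμm.ae_le (Measure.rnDeriv_lt_top μ m),
    (Measure.rnDeriv_pos hmρ).filter_mono hμm.ae_le,
    (hμm.trans hmρ).ae_le (Measure.rnDeriv_lt_top m ρ)] with x h1 h2 h3 h4 h5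
  have ha : 0 < (μ.rnDeriv m x).toReal := ENNReal.toReal_pos h2.ne' h3.ne
  have hb : 0 < (m.rnDeriv ρ x).toReal := ENNReal.toReal_pos h4.ne' h5.ne
  simp only [llr_def]
  rw [← h1, Pi.mul_apply, ENNReal.toReal_mul, Real.log_mul ha.ne' hb.ne']

end Aux

/-- Lemma 1, gradient form: the gradient of the negative GAN generator objective at `θ₀`
equals the gradient of `E_{p(y)}[KL(p_θ(x|y)‖q^r(x|y))] − JSD(p_{g_θ}, p_data)` at `θ₀`. -/
theorem gan_generator_gradient
    {X : Type*} [MeasurableSpace X] (β : Measure X) [IsProbabilityMeasure β]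
    {d : ℕ} (θ₀ : EuclideanSpace ℝ (Fin d))
    (P : EuclideanSpace ℝ (Fin d) → Measure X) [∀ θ, IsProbabilityMeasure (P θ)]
    (r : X → ℝ) (hr_meas : Measurable r) (hr01 : ∀ x, r x ∈ Set.Ioo (0 : ℝ) 1)
    (ρ : Measure X) (hρ : ρ = (1 / 2 : ℝ≥0∞) • P θ₀ + (1 / 2 : ℝ≥0∞) • β)
    (Z₀ : ℝ) (hZ₀_def : Z₀ = ∫ x, r x ∂ρ) (hZ₀ : 0 < Z₀ ∧ Z₀ < 1)
    (π₀ π₁ : Measure X)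
    (hπ₀ : π₀ = (ENNReal.ofReal Z₀)⁻¹ • ρ.withDensity (fun x => ENNReal.ofReal (r x)))
    (hπ₁ : π₁ = (ENNReal.ofReal (1 - Z₀))⁻¹ •
      ρ.withDensity (fun x => ENNReal.ofReal (1 - r x)))
    (hβint : Integrable (fun x => Real.log (1 - r x)) β)
    (hβkl : klDiv β π₁ < ⊤)
    (hU : ∃ U ∈ nhds θ₀, ∀ θ ∈ U, P θ ≪ ρ ∧ klDiv (P θ) ρ < ⊤ ∧
      Integrable (fun x => Real.log (r x)) (P θ))
    (G : EuclideanSpace ℝ (Fin d) → ℝ)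
    (hG_def : G = fun θ => (1 / 2) * (klDiv (P θ) π₀).toReal
      + (1 / 2) * (klDiv β π₁).toReal - (JSD (P θ) β).toReal)
    (hG : DifferentiableAt ℝ G θ₀)
    (H : EuclideanSpace ℝ (Fin d) → ℝ)
    (hH_def : H = fun θ =>
      (klDiv ((1 / 2 : ℝ≥0∞) • P θ + (1 / 2 : ℝ≥0∞) • β) ρ).toReal)
    (hH : DifferentiableAt ℝ H θ₀)
    (F : EuclideanSpace ℝ (Fin d) → ℝ)
    (hF_def : F = fun θ => -((1 / 2) * ∫ x, Real.log (r x) ∂(P θ))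
      - (1 / 2) * ∫ x, Real.log (1 - r x) ∂β) :
    DifferentiableAt ℝ F θ₀ ∧ fderiv ℝ F θ₀ = fderiv ℝ G θ₀ := by
  obtain ⟨hZ₀pos, hZ₀lt⟩ := hZ₀
  obtain ⟨U, hUnhds, hUprop⟩ := hU
  haveI hρprob : IsProbabilityMeasure ρ := by rw [hρ]; exact aux_isProb_mix _ _
  have h2ρ : (2:ℝ≥0∞) • ρ = P θ₀ + β := by
    rw [hρ, smul_add, one_div, smul_smul, smul_smul,
      ENNReal.mul_inv_cancel two_ne_zero (by norm_num), one_smul, one_smul]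
  have hβ2ρ : β ≤ (2:ℝ≥0∞) • ρ := by rw [h2ρ]; exact Measure.le_add_left le_rfl
  have hβρ : β ≪ ρ := Measure.absolutelyContinuous_of_le_smul hβ2ρ
  obtain ⟨hβπ₁, hβπ₁_int⟩ := aux_klDiv_cond_of_lt_top hβkl
  have hr_int : Integrable r ρ := by
    apply Integrable.mono' (integrable_const (1:ℝ)) hr_meas.aestronglyMeasurable
    refine .of_forall fun x => ?_
    rw [Real.norm_eq_abs, abs_of_pos (hr01 x).1]; exact (hr01 x).2.le
  have h1r_int : Integrable (fun x => 1 - r x) ρ := (integrable_const 1).sub hr_int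
  have hwd₀ : ρ.withDensity (fun x => ENNReal.ofReal (r x)) Set.univ = ENNReal.ofReal Z₀ := by
    rw [withDensity_apply _ MeasurableSet.univ, setLIntegral_univ,
      ← ofReal_integral_eq_lintegral_ofReal hr_int (.of_forall fun x => (hr01 x).1.le), hZ₀_def]
  have hwd₁ : ρ.withDensity (fun x => ENNReal.ofReal (1 - r x)) Set.univ
      = ENNReal.ofReal (1 - Z₀) := by
    rw [withDensity_apply _ MeasurableSet.univ, setLIntegral_univ,
      ← ofReal_integral_eq_lintegral_ofReal h1r_int
        (.of_forall fun x => sub_nonneg.mpr (hr01 x).2.le)]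
    congr 1
    rw [integral_sub (integrable_const 1) hr_int, hZ₀_def, integral_const]
    simp
  haveI hπ₀prob : IsProbabilityMeasure π₀ := by
    constructor
    rw [hπ₀, Measure.smul_apply, hwd₀, smul_eq_mul,
      ENNReal.inv_mul_cancel (by simpa [ENNReal.ofReal_eq_zero, not_le] using hZ₀pos)
        ENNReal.ofReal_ne_top]
  haveI hπ₁prob : IsProbabilityMeasure π₁ := by
    constructor
    rw [hπ₁, Measure.smul_apply, hwd₁, smul_eq_mul,
      ENNReal.inv_mul_cancel
        (by simp only [ne_eq, ENNReal.ofReal_eq_zero, not_le]; linarith)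
        ENNReal.ofReal_ne_top]
  have hllrβπ₁ : llr β π₁ =ᵐ[β] fun x => Real.log (1 - Z₀) - Real.log (1 - r x) + llr β ρ x := by
    rw [hπ₁]
    exact aux_llr_smul_withDensity hβρ (measurable_const.sub hr_meas)
      (fun x => by show (0:ℝ) < 1 - r x; linarith [(hr01 x).2]) (fun x => by show (1:ℝ) - r x ≤ 1; linarith [(hr01 x).1]) (by linarith)
  have hllrβρ_int : Integrable (llr β ρ) β := by
    have h : Integrable (fun x => llr β π₁ x - Real.log (1 - Z₀) + Real.log (1 - r x)) β :=
      (hβπ₁_int.sub (integrable_const _)).add hβint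
    apply h.congr
    filter_upwards [hllrβπ₁] with x hx
    rw [hx]; ring
  have eq2 : (klDiv β π₁).toReal = Real.log (1 - Z₀) - ∫ x, Real.log (1 - r x) ∂β
      + ∫ x, llr β ρ x ∂β := by
    have hcs : Integrable (fun x => Real.log (1 - Z₀) - Real.log (1 - r x)) β :=
      (integrable_const _).sub hβint
    rw [aux_klDiv_toReal hβπ₁ hβπ₁_int, integral_congr_ae hllrβπ₁,
      integral_add hcs hllrβρ_int,
      integral_sub (integrable_const _) hβint, integral_const]
    simp
  set c₀ : ℝ := (1/2) * Real.log Z₀ + (1/2) * Real.log (1 - Z₀) with hc₀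
  -- the key identity on U
  have key : ∀ θ ∈ U, F θ = G θ - H θ - c₀ := by
    intro θ hθU
    obtain ⟨hμρ, hμkl, hμint⟩ := hUprop θ hθU
    obtain ⟨_, hllrμρ_int⟩ := aux_klDiv_cond_of_lt_top hμkl
    set μ : Measure X := P θ with hμdef
    haveI : IsProbabilityMeasure μ := by rw [hμdef]; infer_instance
    set m : Measure X := (1/2:ℝ≥0∞) • μ + (1/2:ℝ≥0∞) • β with hm
    haveI hmprob : IsProbabilityMeasure m := by rw [hm]; exact aux_isProb_mix μ β
    haveI : IsFiniteMeasure ((1/2:ℝ≥0∞) • μ) := by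
      constructor
      rw [Measure.smul_apply, smul_eq_mul, measure_univ, mul_one]
      exact ENNReal.div_lt_top ENNReal.one_ne_top two_ne_zero
    haveI : IsFiniteMeasure ((1/2:ℝ≥0∞) • β) := by
      constructor
      rw [Measure.smul_apply, smul_eq_mul, measure_univ, mul_one]
      exact ENNReal.div_lt_top ENNReal.one_ne_top two_ne_zero
    have h2m : (2:ℝ≥0∞) • m = μ + β := by
      rw [hm, smul_add, one_div, smul_smul, smul_smul,
        ENNReal.mul_inv_cancel two_ne_zero (by norm_num), one_smul, one_smul]
    have hμm : μ ≪ m := Measure.absolutelyContinuous_of_le_smul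
      (by rw [h2m]; exact Measure.le_add_right le_rfl)
    have hβm : β ≪ m := Measure.absolutelyContinuous_of_le_smul
      (by rw [h2m]; exact Measure.le_add_left le_rfl)
    have hmρ : m ≪ ρ := by
      rw [hm]
      exact Measure.AbsolutelyContinuous.add_left
        (Measure.smul_absolutelyContinuous.trans hμρ)
        (Measure.smul_absolutelyContinuous.trans hβρ)
    have hm_rn : m.rnDeriv ρ =ᵐ[ρ]
        fun x => 2⁻¹ * μ.rnDeriv ρ x + 2⁻¹ * β.rnDeriv ρ x := by
      have h1 : m.rnDeriv ρ =ᵐ[ρ]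
          ((1/2:ℝ≥0∞) • μ).rnDeriv ρ + ((1/2:ℝ≥0∞) • β).rnDeriv ρ := by
        rw [hm]; exact Measure.rnDeriv_add' _ _ _
      have h2 := Measure.rnDeriv_smul_left_of_ne_top μ ρ
        (r := (1/2:ℝ≥0∞)) (by simp)
      have h3 := Measure.rnDeriv_smul_left_of_ne_top β ρ
        (r := (1/2:ℝ≥0∞)) (by simp)
      filter_upwards [h1, h2, h3] with x hx1 hx2 hx3
      rw [hx1, Pi.add_apply, hx2, hx3, Pi.smul_apply, Pi.smul_apply,
        smul_eq_mul, smul_eq_mul, one_div]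
    have hβrn2 : ∀ᵐ x ∂ρ, β.rnDeriv ρ x ≤ 2 := by
      have hle : ((1/2:ℝ≥0∞) • β).rnDeriv ρ ≤ᵐ[ρ] 1 :=
        Measure.rnDeriv_le_one_of_le (by rw [hρ]; exact Measure.le_add_left le_rfl)
      have h3 := Measure.rnDeriv_smul_left_of_ne_top β ρ
        (r := (1/2:ℝ≥0∞)) (by simp)
      filter_upwards [hle, h3] with x hx1 hx2
      rw [hx2] at hx1
      simp only [Pi.smul_apply, smul_eq_mul, Pi.one_apply, one_div] at hx1
      calc β.rnDeriv ρ x = 2 * (2⁻¹ * β.rnDeriv ρ x) := by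
            rw [← mul_assoc, ENNReal.mul_inv_cancel two_ne_zero (by norm_num), one_mul]
        _ ≤ 2 * 1 := mul_le_mul_right hx1 2
        _ = 2 := mul_one 2
    -- integrability of llr m ρ with respect to μ
    have hllrmρ_int_μ : Integrable (llr m ρ) μ := by
      refine Integrable.mono' ((integrable_const (Real.log 2)).add hllrμρ_int.abs)
        (measurable_llr _ _).aestronglyMeasurable ?_
      filter_upwards [hμρ.ae_eq hm_rn, Measure.rnDeriv_pos hμρ,
        hμρ.ae_le (Measure.rnDeriv_lt_top μ ρ), hμρ.ae_le hβrn2] with x hx hpos hlt hb2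
      have hDpos : 0 < (μ.rnDeriv ρ x).toReal := ENNReal.toReal_pos hpos.ne' hlt.ne
      have hBlt : β.rnDeriv ρ x < ⊤ := lt_of_le_of_lt hb2 (by norm_num)
      have hMr : (m.rnDeriv ρ x).toReal
          = 2⁻¹ * (μ.rnDeriv ρ x).toReal + 2⁻¹ * (β.rnDeriv ρ x).toReal := by
        rw [hx, ENNReal.toReal_add (ENNReal.mul_ne_top (by norm_num) hlt.ne)
          (ENNReal.mul_ne_top (by norm_num) hBlt.ne), ENNReal.toReal_mul, ENNReal.toReal_mul]
        simp
      have hBr : (β.rnDeriv ρ x).toReal ≤ 2 := by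
        have := ENNReal.toReal_mono (a := β.rnDeriv ρ x) (b := 2) (by norm_num) hb2
        simpa using this
      have hBr0 : (0:ℝ) ≤ (β.rnDeriv ρ x).toReal := ENNReal.toReal_nonneg
      have hlow : 2⁻¹ * (μ.rnDeriv ρ x).toReal ≤ (m.rnDeriv ρ x).toReal := by
        rw [hMr]; linarith
      have hup : (m.rnDeriv ρ x).toReal ≤ 2⁻¹ * (μ.rnDeriv ρ x).toReal + 1 := by
        rw [hMr]; linarith
      have hMpos : 0 < (m.rnDeriv ρ x).toReal := lt_of_lt_of_le (by positivity) hlow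
      have h1 : Real.log (μ.rnDeriv ρ x).toReal - Real.log 2
          ≤ Real.log (m.rnDeriv ρ x).toReal := by
        have h := Real.log_le_log (by positivity) hlow
        rw [Real.log_mul (by norm_num) hDpos.ne', Real.log_inv] at h
        linarith
      have h2 : Real.log (m.rnDeriv ρ x).toReal
          ≤ Real.log 2 + |Real.log (μ.rnDeriv ρ x).toReal| := by
        rcases le_total (μ.rnDeriv ρ x).toReal 2 with hD2 | hD2
        · have hM2 : (m.rnDeriv ρ x).toReal ≤ 2 := by linarith
          have := Real.log_le_log hMpos hM2
          have habs : (0:ℝ) ≤ |Real.log (μ.rnDeriv ρ x).toReal| := abs_nonneg _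
          linarith
        · have hMD : (m.rnDeriv ρ x).toReal ≤ (μ.rnDeriv ρ x).toReal := by linarith
          have h' := Real.log_le_log hMpos hMD
          have habs := le_abs_self (Real.log (μ.rnDeriv ρ x).toReal)
          have hl2 : (0:ℝ) ≤ Real.log 2 := Real.log_nonneg (by norm_num)
          linarith
      have habs2 := neg_abs_le (Real.log (μ.rnDeriv ρ x).toReal)
      have hbound : |Real.log (m.rnDeriv ρ x).toReal|
          ≤ Real.log 2 + |Real.log (μ.rnDeriv ρ x).toReal| :=
        abs_le.mpr ⟨by linarith, h2⟩
      simpa [llr_def, Real.norm_eq_abs] using hbound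
    -- integrability of (m.rnDeriv ρ).toReal with respect to β
    have hmrn_int_β : Integrable (fun x => (m.rnDeriv ρ x).toReal) β := by
      refine integrable_toReal_of_lintegral_ne_top
        (Measure.measurable_rnDeriv m ρ).aemeasurable ?_
      have hle : ∫⁻ x, m.rnDeriv ρ x ∂β ≤ (2:ℝ≥0∞) * ∫⁻ x, m.rnDeriv ρ x ∂ρ := by
        rw [← smul_eq_mul, ← lintegral_smul_measure]
        exact lintegral_mono' hβ2ρ le_rfl
      refine (hle.trans_lt ?_).ne
      calc (2:ℝ≥0∞) * ∫⁻ x, m.rnDeriv ρ x ∂ρ ≤ 2 * m Set.univ :=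
            mul_le_mul_right Measure.lintegral_rnDeriv_le 2
        _ < ⊤ := by rw [measure_univ, mul_one]; norm_num
    have hllrmρ_int_β : Integrable (llr m ρ) β := by
      refine Integrable.mono'
        (((integrable_const (Real.log 2)).add hllrβρ_int.abs).add hmrn_int_β)
        (measurable_llr _ _).aestronglyMeasurable ?_
      filter_upwards [hβρ.ae_eq hm_rn, Measure.rnDeriv_pos hβρ,
        hβρ.ae_le (Measure.rnDeriv_lt_top β ρ),
        hβρ.ae_le (Measure.rnDeriv_lt_top μ ρ)] with x hx hpos hlt hμlt
      have hBpos : 0 < (β.rnDeriv ρ x).toReal := ENNReal.toReal_pos hpos.ne' hlt.ne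
      have hMr : (m.rnDeriv ρ x).toReal
          = 2⁻¹ * (μ.rnDeriv ρ x).toReal + 2⁻¹ * (β.rnDeriv ρ x).toReal := by
        rw [hx, ENNReal.toReal_add (ENNReal.mul_ne_top (by norm_num) hμlt.ne)
          (ENNReal.mul_ne_top (by norm_num) hlt.ne), ENNReal.toReal_mul, ENNReal.toReal_mul]
        simp
      have hD0 : (0:ℝ) ≤ (μ.rnDeriv ρ x).toReal := ENNReal.toReal_nonneg
      have hlow' : 2⁻¹ * (β.rnDeriv ρ x).toReal ≤ (m.rnDeriv ρ x).toReal := by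
        rw [hMr]; linarith
      have hMpos : 0 < (m.rnDeriv ρ x).toReal := lt_of_lt_of_le (by positivity) hlow'
      have h1 : Real.log (β.rnDeriv ρ x).toReal - Real.log 2
          ≤ Real.log (m.rnDeriv ρ x).toReal := by
        have h := Real.log_le_log (by positivity) hlow'
        rw [Real.log_mul (by norm_num) hBpos.ne', Real.log_inv] at h
        linarith
      have hup : Real.log (m.rnDeriv ρ x).toReal ≤ (m.rnDeriv ρ x).toReal := by
        have := Real.log_le_sub_one_of_pos hMpos
        linarith
      have habs := neg_abs_le (Real.log (β.rnDeriv ρ x).toReal)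
      have hl2 : (0:ℝ) ≤ Real.log 2 := Real.log_nonneg (by norm_num)
      have habs0 : (0:ℝ) ≤ |Real.log (β.rnDeriv ρ x).toReal| := abs_nonneg _
      have hbound : |Real.log (m.rnDeriv ρ x).toReal|
          ≤ Real.log 2 + |Real.log (β.rnDeriv ρ x).toReal| + (m.rnDeriv ρ x).toReal :=
        abs_le.mpr ⟨by linarith, by linarith⟩
      simpa [llr_def, Real.norm_eq_abs] using hbound
    have hint1 : Integrable (llr m ρ) ((1/2:ℝ≥0∞) • μ) :=
      (integrable_smul_measure (by norm_num) (by simp)).mpr hllrmρ_int_μ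
    have hint2 : Integrable (llr m ρ) ((1/2:ℝ≥0∞) • β) :=
      (integrable_smul_measure (by norm_num) (by simp)).mpr hllrmρ_int_β
    have hllrmρ_int_m : Integrable (llr m ρ) m := hm.symm ▸ hint1.add_measure hint2
    have hintm : ∫ x, llr m ρ x ∂m
        = 2⁻¹ * (∫ x, llr m ρ x ∂μ) + 2⁻¹ * (∫ x, llr m ρ x ∂β) := by
      calc ∫ x, llr m ρ x ∂m
          = ∫ x, llr m ρ x ∂((1/2:ℝ≥0∞) • μ + (1/2:ℝ≥0∞) • β) :=
            congrArg (fun ν => ∫ x, llr m ρ x ∂ν) hm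
        _ = 2⁻¹ * (∫ x, llr m ρ x ∂μ) + 2⁻¹ * (∫ x, llr m ρ x ∂β) := by
            rw [integral_add_measure hint1 hint2, integral_smul_measure,
              integral_smul_measure]
            norm_num [ENNReal.toReal_div, smul_eq_mul]
    -- chain rule identities
    have hchainμ : llr μ ρ =ᵐ[μ] fun x => llr μ m x + llr m ρ x := aux_llr_chain hμm hmρ
    have hchainβ : llr β ρ =ᵐ[β] fun x => llr β m x + llr m ρ x := aux_llr_chain hβm hmρ
    have hllrμm_int : Integrable (llr μ m) μ := by
      have h : Integrable (fun x => llr μ ρ x - llr m ρ x) μ :=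
        hllrμρ_int.sub hllrmρ_int_μ
      apply h.congr
      filter_upwards [hchainμ] with x hx
      rw [hx]; ring
    have hllrβm_int : Integrable (llr β m) β := by
      have h : Integrable (fun x => llr β ρ x - llr m ρ x) β :=
        hllrβρ_int.sub hllrmρ_int_β
      apply h.congr
      filter_upwards [hchainβ] with x hx
      rw [hx]; ring
    have hAm : ∫ x, llr μ ρ x ∂μ = ∫ x, llr μ m x ∂μ + ∫ x, llr m ρ x ∂μ := by
      rw [← integral_add hllrμm_int hllrmρ_int_μ]
      exact integral_congr_ae hchainμ
    have hBm : ∫ x, llr β ρ x ∂β = ∫ x, llr β m x ∂β + ∫ x, llr m ρ x ∂β := by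
      rw [← integral_add hllrβm_int hllrmρ_int_β]
      exact integral_congr_ae hchainβ
    -- klDiv μ π₀
    have hρwd : ρ ≪ ρ.withDensity (fun x => ENNReal.ofReal (r x)) :=
      withDensity_absolutelyContinuous' hr_meas.ennreal_ofReal.aemeasurable
        (.of_forall fun x => by simp [ENNReal.ofReal_eq_zero, not_le, (hr01 x).1])
    have hμπ₀ : μ ≪ π₀ := by
      rw [hπ₀]
      exact (hμρ.trans hρwd).trans
        (Measure.absolutelyContinuous_smul (by simp [ENNReal.ofReal_ne_top]))
    have hllrμπ₀ : llr μ π₀ =ᵐ[μ] fun x => Real.log Z₀ - Real.log (r x) + llr μ ρ x := by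
      rw [hπ₀]
      exact aux_llr_smul_withDensity hμρ hr_meas (fun x => (hr01 x).1)
        (fun x => (hr01 x).2.le) hZ₀pos
    have hcsμ : Integrable (fun x => Real.log Z₀ - Real.log (r x)) μ :=
      (integrable_const _).sub hμint
    have hllrμπ₀_int : Integrable (llr μ π₀) μ :=
      (hcsμ.add hllrμρ_int).congr hllrμπ₀.symm
    have eq1 : (klDiv μ π₀).toReal
        = Real.log Z₀ - ∫ x, Real.log (r x) ∂μ + ∫ x, llr μ ρ x ∂μ := by
      rw [aux_klDiv_toReal hμπ₀ hllrμπ₀_int, integral_congr_ae hllrμπ₀,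
        integral_add hcsμ hllrμρ_int,
        integral_sub (integrable_const _) hμint, integral_const]
      simp
    -- JSD
    have hklμm := aux_klDiv_eq_ofReal hμm hllrμm_int
    have hklβm := aux_klDiv_eq_ofReal hβm hllrβm_int
    have hAm0 : 0 ≤ ∫ x, llr μ m x ∂μ := aux_integral_llr_nonneg hμm hllrμm_int
    have hBm0 : 0 ≤ ∫ x, llr β m x ∂β := aux_integral_llr_nonneg hβm hllrβm_int
    have eq3 : (JSD μ β).toReal
        = 2⁻¹ * ∫ x, llr μ m x ∂μ + 2⁻¹ * ∫ x, llr β m x ∂β := by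
      unfold JSD
      rw [← hm, hklμm, hklβm,
        ENNReal.toReal_add
          (ENNReal.mul_ne_top ((ENNReal.div_lt_top ENNReal.one_ne_top two_ne_zero).ne)
            ENNReal.ofReal_ne_top)
          (ENNReal.mul_ne_top ((ENNReal.div_lt_top ENNReal.one_ne_top two_ne_zero).ne)
            ENNReal.ofReal_ne_top),
        ENNReal.toReal_mul, ENNReal.toReal_mul, ENNReal.toReal_ofReal hAm0,
        ENNReal.toReal_ofReal hBm0]
      norm_num [ENNReal.toReal_div]
    -- klDiv m ρ (the H-term)
    have eq4 : (klDiv m ρ).toReal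
        = 2⁻¹ * ∫ x, llr m ρ x ∂μ + 2⁻¹ * ∫ x, llr m ρ x ∂β := by
      rw [aux_klDiv_toReal hmρ hllrmρ_int_m, hintm]
    -- assemble
    rw [hF_def, hG_def, hH_def]
    simp only [← hμdef, ← hm]
    rw [eq1, eq3, eq4, eq2, hc₀]
    linarith [hAm, hBm]
  -- gradient of H vanishes at θ₀
  have hHval : H θ₀ = 0 := by
    rw [hH_def]
    simp only [← hρ]
    rw [aux_klDiv_self ρ]
    simp
  have hmin : IsLocalMin H θ₀ := by
    refine Filter.Eventually.of_forall fun θ => ?_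
    rw [hHval, hH_def]
    exact ENNReal.toReal_nonneg
  have hHgrad : fderiv ℝ H θ₀ = 0 := hmin.fderiv_eq_zero
  have heq : F =ᶠ[nhds θ₀] fun θ => G θ - H θ - c₀ :=
    Filter.eventually_of_mem hUnhds key
  have hdiff' : DifferentiableAt ℝ (fun θ => G θ - H θ - c₀) θ₀ :=
    (hG.sub hH).sub_const c₀
  have hFdiff : DifferentiableAt ℝ F θ₀ := hdiff'.congr_of_eventuallyEq heq
  refine ⟨hFdiff, ?_⟩
  rw [heq.fderiv_eq, fderiv_sub_const, fderiv_fun_sub hG hH, hHgrad, sub_zero]
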